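/- (Lemma 3.7.) For i = 1, …, q let C_i ∈ ℂ^{p_i×p_i} be a matrix in congruence canonical form given by explicit block data, i.e., C_i = ⊕_j J_{k_j^{(i)}}(0) ⊕ ⊕_j Γ_{ℓ_j^{(i)}} ⊕ ⊕_j H_{2m_j^{(i)}}(μ_j^{(i)}) ⊕ ⊕_j H_{2p_j^{(i)}}((−1)^{p_j^{(i)}}), where each μ_j^{(i)} satisfies |μ_j^{(i)}| > 1 or μ_j^{(i)} = e^{iθ} with 0 < θ < π, and let A_i belong to the closure of ℬᶜ(C_i). Suppose that 𝒮_Hᵀ(C_i) ∩ 𝒮_Hᵀ(C_j) = ∅ for all i ≠ j. Then A_1 ⊕ ⋯ ⊕ A_q belongs to the closure of ℬᶜ(C_1 ⊕ ⋯ ⊕ C_q). -/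

import Mathlib

open Matrix

noncomputable section

/-- The `k × k` Jordan block `J_k(μ)` (eigenvalue `μ` on the diagonal, `1` on the
superdiagonal). -/
def Jblock (k : ℕ) (μ : ℂ) : Matrix (Fin k) (Fin k) ℂ :=
  Matrix.of fun i j =>
    if (j : ℕ) = (i : ℕ) then μ else if (j : ℕ) = (i : ℕ) + 1 then 1 else 0

/-- The `k × k` matrix `Γ_k`: in 1-based indexing, the `(i,j)` entry is `(-1)^(k-i)`
when `j = k+1-i` or `j = k+2-i`, and `0` otherwise. -/
def Gamma (k : ℕ) : Matrix (Fin k) (Fin k) ℂ :=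
  Matrix.of fun i j =>
    if (i : ℕ) + (j : ℕ) = k - 1 ∨ (i : ℕ) + (j : ℕ) = k then
      (-1 : ℂ) ^ (k - 1 - (i : ℕ)) else 0

/-- Block-diagonal direct sum of two square complex matrices. -/
def dsum {m n : ℕ} (A : Matrix (Fin m) (Fin m) ℂ) (B : Matrix (Fin n) (Fin n) ℂ) :
    Matrix (Fin (m + n)) (Fin (m + n)) ℂ :=
  Matrix.reindex finSumFinEquiv finSumFinEquiv (Matrix.fromBlocks A 0 0 B)

/-- The `2k × 2k` matrix `H_{2k}(μ) = [[0, I_k], [J_k(μ), 0]]`. -/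
def Hblock (k : ℕ) (μ : ℂ) : Matrix (Fin (k + k)) (Fin (k + k)) ℂ :=
  Matrix.reindex finSumFinEquiv finSumFinEquiv (Matrix.fromBlocks 0 1 (Jblock k μ) 0)

/-- The total size of a family of sizes `p : Fin q → ℕ`. -/
def finSize : {q : ℕ} → (Fin q → ℕ) → ℕ
  | 0, _ => 0
  | _ + 1, p => p 0 + finSize fun i => p i.succ

/-- Block-diagonal direct sum of a family of square complex matrices of sizes
`p 0, …, p (q-1)`. -/
def finDsum : {q : ℕ} → (p : Fin q → ℕ) →
    ((i : Fin q) → Matrix (Fin (p i)) (Fin (p i)) ℂ) →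
    Matrix (Fin (finSize p)) (Fin (finSize p)) ℂ
  | 0, _, _ => 0
  | _ + 1, p, M => dsum (M 0) (finDsum (fun i => p i.succ) fun i => M i.succ)

/-- A complex number `μ` is a valid Type II-(a) parameter when `|μ| > 1` or
`μ = e^(iθ)` with `0 < θ < π`. -/
def TypeIIaParam (μ : ℂ) : Prop :=
  1 < ‖μ‖ ∨ ∃ θ : ℝ, 0 < θ ∧ θ < Real.pi ∧ μ = Complex.exp ((θ : ℂ) * Complex.I)

/-- Block data of a matrix in congruence canonical form
`⊕ J_{k_j}(0) ⊕ ⊕ Γ_{l_j} ⊕ ⊕ H_{2 m_j}(μ_j) ⊕ ⊕ H_{2 p_j}((-1)^{p_j})`. -/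
structure CongData : Type where
  n1 : ℕ
  n2 : ℕ
  n3 : ℕ
  n4 : ℕ
  k : Fin n1 → ℕ
  l : Fin n2 → ℕ
  m : Fin n3 → ℕ
  mu : Fin n3 → ℂ
  p : Fin n4 → ℕ

/-- The size of the canonical matrix described by the block data. -/
def CongData.size (d : CongData) : ℕ :=
  finSize d.k +
    (finSize d.l + (finSize (fun i => d.m i + d.m i) + finSize fun i => d.p i + d.p i))

/-- The canonical matrix with the block structure of `d` but with the Type II-(a)
parameters replaced by `mu`. -/
def CongData.matWith (d : CongData) (mu : Fin d.n3 → ℂ) :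
    Matrix (Fin d.size) (Fin d.size) ℂ :=
  dsum (finDsum d.k fun i => Jblock (d.k i) 0)
    (dsum (finDsum d.l fun i => Gamma (d.l i))
      (dsum (finDsum (fun i => d.m i + d.m i) fun i => Hblock (d.m i) (mu i))
        (finDsum (fun i => d.p i + d.p i) fun i => Hblock (d.p i) ((-1) ^ d.p i))))

/-- Validity of the block data: all the sizes are at least `1` and every `μ_j`
satisfies `|μ_j| > 1` or `μ_j = e^(iθ)` with `0 < θ < π`. -/
def CongData.Valid (d : CongData) : Prop :=
  (∀ i, 1 ≤ d.k i) ∧ (∀ i, 1 ≤ d.l i) ∧ (∀ i, 1 ≤ d.m i) ∧ (∀ i, 1 ≤ d.p i) ∧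
    ∀ i, TypeIIaParam (d.mu i)

/-- The constraints that the replaced parameters must satisfy in the definition of the
congruence bundle of `d`. -/
def CongData.ParamsOK (d : CongData) (mu : Fin d.n3 → ℂ) : Prop :=
  (∀ i, TypeIIaParam (mu i)) ∧ ∀ i j, mu i ≠ mu j ↔ d.mu i ≠ d.mu j

/-- The congruence bundle `ℬᶜ(C)` of the canonical matrix `C` described by the block
data `d`. -/
def congBundle (d : CongData) : Set (Matrix (Fin d.size) (Fin d.size) ℂ) :=
  {A | ∃ (mu : Fin d.n3 → ℂ) (P : Matrix (Fin d.size) (Fin d.size) ℂ),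
    IsUnit P ∧ d.ParamsOK mu ∧ A = P * d.matWith mu * Pᵀ}

/-- The parameter set `𝒮ᵀ_H(C) = {μ_j : 1 ≤ j ≤ n3}`. -/
def CongData.SH (d : CongData) : Set ℂ := Set.range d.mu

/-- The direct sum of two canonical matrices: concatenation of the block data. -/
def CongData.append (d e : CongData) : CongData :=
  ⟨d.n1 + e.n1, d.n2 + e.n2, d.n3 + e.n3, d.n4 + e.n4, Fin.append d.k e.k,
    Fin.append d.l e.l, Fin.append d.m e.m, Fin.append d.mu e.mu, Fin.append d.p e.p⟩

/-- The direct sum `C_1 ⊕ ⋯ ⊕ C_q` of a family of canonical matrices: concatenation of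
the block data. -/
def appendAll : {q : ℕ} → (Fin q → CongData) → CongData
  | 0, _ => ⟨0, 0, 0, 0, Fin.elim0, Fin.elim0, Fin.elim0, Fin.elim0, Fin.elim0⟩
  | _ + 1, C => CongData.append (C 0) (appendAll fun i => C i.succ)

-- Stage 1: PermCong infrastructure
section Infra

/-- A sigma-type bundling a square complex matrix with its size. -/
abbrev SigMat := (n : ℕ) × Matrix (Fin n) (Fin n) ℂ

/-- Permutation congruence between square matrices of (possibly definitionally
different) sizes. -/
def PermCong {m n : ℕ} (A : Matrix (Fin m) (Fin m) ℂ) (B : Matrix (Fin n) (Fin n) ℂ) : Prop :=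
  ∃ e : Fin m ≃ Fin n, B = A.submatrix e.symm e.symm

lemma PermCong.refl {m : ℕ} (A : Matrix (Fin m) (Fin m) ℂ) : PermCong A A :=
  ⟨Equiv.refl _, by simp⟩

lemma PermCong.symm {m n} {A : Matrix (Fin m) (Fin m) ℂ} {B : Matrix (Fin n) (Fin n) ℂ}
    (h : PermCong A B) : PermCong B A := by
  obtain ⟨e, rfl⟩ := h
  exact ⟨e.symm, by ext i j; simp⟩

lemma PermCong.trans {m n p} {A : Matrix (Fin m) (Fin m) ℂ} {B : Matrix (Fin n) (Fin n) ℂ}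
    {C : Matrix (Fin p) (Fin p) ℂ} (h1 : PermCong A B) (h2 : PermCong B C) : PermCong A C := by
  obtain ⟨e1, rfl⟩ := h1; obtain ⟨e2, rfl⟩ := h2
  exact ⟨e1.trans e2, by ext i j; simp⟩

@[simp] lemma dsum_apply_cc {m n} (A : Matrix (Fin m) (Fin m) ℂ) (B : Matrix (Fin n) (Fin n) ℂ)
    (i j : Fin m) : dsum A B (Fin.castAdd n i) (Fin.castAdd n j) = A i j := by
  simp [dsum]

@[simp] lemma dsum_apply_cn {m n} (A : Matrix (Fin m) (Fin m) ℂ) (B : Matrix (Fin n) (Fin n) ℂ)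
    (i : Fin m) (j : Fin n) : dsum A B (Fin.castAdd n i) (Fin.natAdd m j) = 0 := by
  simp [dsum]

@[simp] lemma dsum_apply_nc {m n} (A : Matrix (Fin m) (Fin m) ℂ) (B : Matrix (Fin n) (Fin n) ℂ)
    (i : Fin n) (j : Fin m) : dsum A B (Fin.natAdd m i) (Fin.castAdd n j) = 0 := by
  simp [dsum]

@[simp] lemma dsum_apply_nn {m n} (A : Matrix (Fin m) (Fin m) ℂ) (B : Matrix (Fin n) (Fin n) ℂ)
    (i j : Fin n) : dsum A B (Fin.natAdd m i) (Fin.natAdd m j) = B i j := by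
  simp [dsum]

lemma permCong_dsum_congr {m n m' n'} {A : Matrix (Fin m) (Fin m) ℂ} {A' : Matrix (Fin m') (Fin m') ℂ}
    {B : Matrix (Fin n) (Fin n) ℂ} {B' : Matrix (Fin n') (Fin n') ℂ}
    (h1 : PermCong A A') (h2 : PermCong B B') : PermCong (dsum A B) (dsum A' B') := by
  obtain ⟨e1, rfl⟩ := h1; obtain ⟨e2, rfl⟩ := h2
  refine ⟨(finSumFinEquiv.symm.trans (Equiv.sumCongr e1 e2)).trans finSumFinEquiv, ?_⟩
  ext i j
  refine Fin.addCases (fun i => ?_) (fun i => ?_) i <;>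
    refine Fin.addCases (fun j => ?_) (fun j => ?_) j <;>
      simp

lemma permCong_dsum_comm {m n} (A : Matrix (Fin m) (Fin m) ℂ) (B : Matrix (Fin n) (Fin n) ℂ) :
    PermCong (dsum A B) (dsum B A) := by
  refine ⟨(finSumFinEquiv.symm.trans (Equiv.sumComm _ _)).trans finSumFinEquiv, ?_⟩
  ext i j
  refine Fin.addCases (fun i => ?_) (fun i => ?_) i <;>
    refine Fin.addCases (fun j => ?_) (fun j => ?_) j <;>
      simp

lemma permCong_dsum_assoc {m n p} (A : Matrix (Fin m) (Fin m) ℂ) (B : Matrix (Fin n) (Fin n) ℂ)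
    (C : Matrix (Fin p) (Fin p) ℂ) : PermCong (dsum (dsum A B) C) (dsum A (dsum B C)) := by
  refine ⟨((finSumFinEquiv.symm.trans (Equiv.sumCongr finSumFinEquiv.symm (Equiv.refl _))).trans
    ((Equiv.sumAssoc _ _ _).trans ((Equiv.sumCongr (Equiv.refl _) finSumFinEquiv).trans
      finSumFinEquiv))), ?_⟩
  ext i j
  refine Fin.addCases (fun i => ?_) (fun i => Fin.addCases (fun i => ?_) (fun i => ?_) i) i <;>
    refine Fin.addCases (fun j => ?_) (fun j => Fin.addCases (fun j => ?_) (fun j => ?_) j) j <;>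
      simp [Equiv.sumAssoc]

end Infra
section Lists

/-- Size of a list of sized matrices. -/
def listSize : List SigMat → ℕ
  | [] => 0
  | x :: L => x.1 + listSize L

/-- Direct sum of a list of sized matrices. -/
def listDsum : (L : List SigMat) → Matrix (Fin (listSize L)) (Fin (listSize L)) ℂ
  | [] => 0
  | x :: L => dsum x.2 (listDsum L)

lemma permCong_listDsum_of_eq {L1 L2 : List SigMat} (h : L1 = L2) :
    PermCong (listDsum L1) (listDsum L2) := h ▸ PermCong.refl _

lemma dsum_zero_left_apply {n} (Z : Matrix (Fin 0) (Fin 0) ℂ) (B : Matrix (Fin n) (Fin n) ℂ)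
    (i j : Fin (0 + n)) :
    dsum Z B i j = B (Fin.cast (Nat.zero_add n) i) (Fin.cast (Nat.zero_add n) j) := by
  refine Fin.addCases (fun i' => i'.elim0) (fun i' => ?_) i
  refine Fin.addCases (fun j' => j'.elim0) (fun j' => ?_) j
  rw [dsum_apply_nn]
  congr 1 <;> exact Fin.ext (by simp)

lemma permCong_finDsum_listDsum : ∀ {q : ℕ} (s : Fin q → SigMat),
    PermCong (finDsum (fun i => (s i).1) (fun i => (s i).2)) (listDsum (List.ofFn s))
  | 0, s => ⟨Equiv.refl _, by ext i j; exact i.elim0⟩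
  | q + 1, s => by
    have ih := permCong_finDsum_listDsum (fun i : Fin q => s i.succ)
    have h1 : PermCong (finDsum (fun i => (s i).1) (fun i => (s i).2))
        (listDsum (s 0 :: List.ofFn fun i => s i.succ)) :=
      permCong_dsum_congr (PermCong.refl (s 0).2) ih
    exact h1.trans (permCong_listDsum_of_eq (List.ofFn_succ (f := s)).symm)

lemma permCong_dsum_listDsum_append (L1 L2 : List SigMat) :
    PermCong (dsum (listDsum L1) (listDsum L2)) (listDsum (L1 ++ L2)) := by
  induction L1 with
  | nil =>
    refine ⟨finCongr (Nat.zero_add _), ?_⟩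
    ext i j
    simp only [Matrix.submatrix_apply]
    exact (dsum_zero_left_apply (listDsum []) (listDsum L2)
      ((finCongr (Nat.zero_add _)).symm i) ((finCongr (Nat.zero_add _)).symm j)).symm
  | cons x L1 ih =>
    exact PermCong.trans (permCong_dsum_assoc x.2 (listDsum L1) (listDsum L2))
      (permCong_dsum_congr (PermCong.refl x.2) ih)

lemma permCong_listDsum_perm {L1 L2 : List SigMat} (h : L1.Perm L2) :
    PermCong (listDsum L1) (listDsum L2) := by
  induction h with
  | nil => exact PermCong.refl _
  | cons x _ ih => exact permCong_dsum_congr (PermCong.refl x.2) ih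
  | swap x y L =>
    refine PermCong.trans (permCong_dsum_assoc y.2 x.2 (listDsum L)).symm ?_
    refine PermCong.trans (permCong_dsum_congr (permCong_dsum_comm y.2 x.2) (PermCong.refl _)) ?_
    exact permCong_dsum_assoc x.2 y.2 (listDsum L)
  | trans _ _ ih1 ih2 => exact PermCong.trans ih1 ih2

end Lists
section Rearrange

/-- Constructor for the `J` block entries of a canonical form, as sized matrices. -/
abbrev jsig (n : ℕ) : SigMat := ⟨n, Jblock n 0⟩
/-- Constructor for the `Γ` block entries. -/
abbrev gsig (n : ℕ) : SigMat := ⟨n, Gamma n⟩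
/-- Constructor for the `H(μ)` block entries. -/
abbrev hsig (n : ℕ) (μ : ℂ) : SigMat := ⟨n + n, Hblock n μ⟩
/-- Constructor for the `H((-1)^p)` block entries. -/
abbrev psig (n : ℕ) : SigMat := ⟨n + n, Hblock n ((-1) ^ n)⟩

/-- The list of blocks of the canonical matrix of `d` with parameters `mu`. -/
abbrev CongData.blocks (d : CongData) (mu : Fin d.n3 → ℂ) : List SigMat :=
  (List.ofFn fun i => jsig (d.k i)) ++ ((List.ofFn fun i => gsig (d.l i)) ++
    ((List.ofFn fun i => hsig (d.m i) (mu i)) ++ List.ofFn fun i => psig (d.p i)))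

lemma permCong_dsum_list {m n : ℕ} {X : Matrix (Fin m) (Fin m) ℂ} {Y : Matrix (Fin n) (Fin n) ℂ}
    {L1 L2 : List SigMat} (h1 : PermCong X (listDsum L1)) (h2 : PermCong Y (listDsum L2)) :
    PermCong (dsum X Y) (listDsum (L1 ++ L2)) :=
  (permCong_dsum_congr h1 h2).trans (permCong_dsum_listDsum_append L1 L2)

lemma permCong_matWith_blocks (d : CongData) (mu : Fin d.n3 → ℂ) :
    PermCong (d.matWith mu) (listDsum (d.blocks mu)) := by
  exact permCong_dsum_list (permCong_finDsum_listDsum fun i => jsig (d.k i))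
    (permCong_dsum_list (permCong_finDsum_listDsum fun i => gsig (d.l i))
      (permCong_dsum_list (permCong_finDsum_listDsum fun i => hsig (d.m i) (mu i))
        (permCong_finDsum_listDsum fun i => psig (d.p i))))

lemma blocks_append (d e : CongData) (m1 : Fin d.n3 → ℂ) (m2 : Fin e.n3 → ℂ) :
    ((d.append e).blocks (Fin.append m1 m2)).Perm (d.blocks m1 ++ e.blocks m2) := by
  have hk : (fun i => jsig ((d.append e).k i)) =
      Fin.append (fun i => jsig (d.k i)) (fun i => jsig (e.k i)) := by
    funext i
    refine Fin.addCases (fun i => ?_) (fun i => ?_) i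
    · show jsig (Fin.append d.k e.k _) = _
      rw [Fin.append_left, Fin.append_left]
    · show jsig (Fin.append d.k e.k _) = _
      rw [Fin.append_right, Fin.append_right]
  have hl : (fun i => gsig ((d.append e).l i)) =
      Fin.append (fun i => gsig (d.l i)) (fun i => gsig (e.l i)) := by
    funext i
    refine Fin.addCases (fun i => ?_) (fun i => ?_) i
    · show gsig (Fin.append d.l e.l _) = _
      rw [Fin.append_left, Fin.append_left]
    · show gsig (Fin.append d.l e.l _) = _
      rw [Fin.append_right, Fin.append_right]
  have hm : (fun i => hsig ((d.append e).m i) (Fin.append m1 m2 i)) =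
      Fin.append (fun i => hsig (d.m i) (m1 i)) (fun i => hsig (e.m i) (m2 i)) := by
    funext i
    refine Fin.addCases (fun i => ?_) (fun i => ?_) i
    · show hsig (Fin.append d.m e.m _) (Fin.append m1 m2 _) = _
      rw [Fin.append_left, Fin.append_left, Fin.append_left]
    · show hsig (Fin.append d.m e.m _) (Fin.append m1 m2 _) = _
      rw [Fin.append_right, Fin.append_right, Fin.append_right]
  have hp : (fun i => psig ((d.append e).p i)) =
      Fin.append (fun i => psig (d.p i)) (fun i => psig (e.p i)) := by
    funext i
    refine Fin.addCases (fun i => ?_) (fun i => ?_) i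
    · show psig (Fin.append d.p e.p _) = _
      rw [Fin.append_left, Fin.append_left]
    · show psig (Fin.append d.p e.p _) = _
      rw [Fin.append_right, Fin.append_right]
  show (List.ofFn _ ++ (List.ofFn _ ++ (List.ofFn _ ++ List.ofFn _))).Perm _
  rw [hk, hl, hm, hp]
  erw [List.ofFn_fin_append, List.ofFn_fin_append, List.ofFn_fin_append,
    List.ofFn_fin_append]
  rw [← Multiset.coe_eq_coe]
  simp only [← Multiset.coe_add]
  abel

lemma permCong_matWith_append (d e : CongData) (m1 : Fin d.n3 → ℂ) (m2 : Fin e.n3 → ℂ) :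
    PermCong ((d.append e).matWith (Fin.append m1 m2)) (dsum (d.matWith m1) (e.matWith m2)) := by
  refine (permCong_matWith_blocks (d.append e) (Fin.append m1 m2)).trans ?_
  refine (permCong_listDsum_perm (blocks_append d e m1 m2)).trans ?_
  exact (permCong_dsum_list (permCong_matWith_blocks d m1) (permCong_matWith_blocks e m2)).symm

lemma finSize_eq_sum : ∀ {q : ℕ} (p : Fin q → ℕ), finSize p = (List.ofFn p).sum
  | 0, p => by rw [List.ofFn_zero]; rfl
  | q + 1, p => by
    rw [List.ofFn_succ, List.sum_cons, ← finSize_eq_sum]; rfl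

lemma finSize_append {a b : ℕ} (p : Fin a → ℕ) (q : Fin b → ℕ) :
    finSize (Fin.append p q) = finSize p + finSize q := by
  simp [finSize_eq_sum, List.ofFn_fin_append]

lemma append_add_self {a b : ℕ} (f : Fin a → ℕ) (g : Fin b → ℕ) :
    (fun i => Fin.append f g i + Fin.append f g i) =
      Fin.append (fun i => f i + f i) (fun i => g i + g i) := by
  funext i
  refine Fin.addCases (fun i => ?_) (fun i => ?_) i
  · rw [Fin.append_left, Fin.append_left]
  · rw [Fin.append_right, Fin.append_right]

lemma CongData.size_append (d e : CongData) : (d.append e).size = d.size + e.size := by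
  show finSize (Fin.append d.k e.k) + (finSize (Fin.append d.l e.l) +
    (finSize (fun i => Fin.append d.m e.m i + Fin.append d.m e.m i) +
      finSize fun i => Fin.append d.p e.p i + Fin.append d.p e.p i)) = _
  rw [append_add_self d.m e.m, append_add_self d.p e.p, finSize_append, finSize_append,
    finSize_append, finSize_append]
  show _ = finSize d.k + (finSize d.l + (finSize _ + finSize _)) +
    (finSize e.k + (finSize e.l + (finSize _ + finSize _)))
  ring

end Rearrange
section Bundle

lemma PermCong.exists_mul {m n : ℕ} {M : Matrix (Fin m) (Fin m) ℂ}
    {N : Matrix (Fin n) (Fin n) ℂ} (h : PermCong M N) :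
    ∃ (Q : Matrix (Fin n) (Fin m) ℂ) (Q' : Matrix (Fin m) (Fin n) ℂ),
      Q * Q' = 1 ∧ Q' * Q = 1 ∧ Qᵀ = Q' ∧ N = Q * M * Qᵀ := by
  obtain ⟨e, rfl⟩ := h
  refine ⟨(1 : Matrix (Fin m) (Fin m) ℂ).submatrix e.symm id,
    (1 : Matrix (Fin m) (Fin m) ℂ).submatrix id e.symm, ?_, ?_, ?_, ?_⟩
  · have := Matrix.submatrix_mul_equiv (1 : Matrix (Fin m) (Fin m) ℂ)
      (1 : Matrix (Fin m) (Fin m) ℂ) e.symm (Equiv.refl (Fin m)) e.symm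
    simpa using this
  · have := Matrix.submatrix_mul_equiv (1 : Matrix (Fin m) (Fin m) ℂ)
      (1 : Matrix (Fin m) (Fin m) ℂ) (id : Fin m → Fin m) e.symm (id : Fin m → Fin m)
    simpa using this
  · ext i j
    simp [Matrix.one_apply, eq_comm]
  · have h1 : (1 : Matrix (Fin m) (Fin m) ℂ).submatrix e.symm id * M =
        M.submatrix e.symm id := by
      have := Matrix.submatrix_mul_equiv (1 : Matrix (Fin m) (Fin m) ℂ)
        M e.symm (Equiv.refl (Fin m)) (id : Fin m → Fin m)
      simpa using this
    have h2 : M.submatrix e.symm id * ((1 : Matrix (Fin m) (Fin m) ℂ).submatrix e.symm id)ᵀ =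
        M.submatrix e.symm e.symm := by
      rw [show ((1 : Matrix (Fin m) (Fin m) ℂ).submatrix e.symm id)ᵀ =
        (1 : Matrix (Fin m) (Fin m) ℂ).submatrix id e.symm by ext i j; simp [Matrix.one_apply, eq_comm]]
      have := Matrix.submatrix_mul_equiv M (1 : Matrix (Fin m) (Fin m) ℂ)
        e.symm (Equiv.refl (Fin m)) e.symm
      simpa using this
    rw [h1, h2]

lemma mem_congBundle_of_permCong {D : CongData} {mu : Fin D.n3 → ℂ} (hmu : D.ParamsOK mu)
    {n : ℕ} {M : Matrix (Fin n) (Fin n) ℂ} (hM : PermCong (D.matWith mu) M)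
    {W : Matrix (Fin n) (Fin n) ℂ} (hW : IsUnit W) (h : n = D.size) :
    Matrix.reindex (finCongr h) (finCongr h) (W * M * Wᵀ) ∈ congBundle D := by
  obtain ⟨Q, Q', hQQ', hQ'Q, hQt, rfl⟩ := hM.exists_mul
  obtain ⟨u, rfl⟩ := hW
  set fc := finCongr h
  set R : Matrix (Fin D.size) (Fin D.size) ℂ := ((u : Matrix (Fin n) (Fin n) ℂ) * Q).submatrix fc.symm id
  have hmain : Matrix.reindex fc fc ((u : Matrix (Fin n) (Fin n) ℂ) * (Q * D.matWith mu * Qᵀ) *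
      (u : Matrix (Fin n) (Fin n) ℂ)ᵀ) = R * D.matWith mu * Rᵀ := by
    have e1 : ((u : Matrix (Fin n) (Fin n) ℂ) * (Q * D.matWith mu * Qᵀ) * (u : Matrix (Fin n) (Fin n) ℂ)ᵀ) =
        ((u : Matrix (Fin n) (Fin n) ℂ) * Q) * D.matWith mu * ((u : Matrix (Fin n) (Fin n) ℂ) * Q)ᵀ := by
      rw [Matrix.transpose_mul]
      simp only [Matrix.mul_assoc]
    rw [e1]
    ext i j
    simp only [Matrix.reindex_apply, Matrix.submatrix_apply, Matrix.mul_apply, R,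
      Matrix.transpose_apply, Matrix.submatrix_apply]
    rfl
  rw [hmain]
  have hRunit : IsUnit R := by
    set Rinv : Matrix (Fin D.size) (Fin D.size) ℂ :=
      (Q' * (↑u⁻¹ : Matrix (Fin n) (Fin n) ℂ)).submatrix id fc.symm
    have h1 : R * Rinv = 1 := by
      have := Matrix.submatrix_mul_equiv ((u : Matrix (Fin n) (Fin n) ℂ) * Q)
        (Q' * (↑u⁻¹ : Matrix (Fin n) (Fin n) ℂ)) fc.symm (Equiv.refl _) fc.symm
      simp only [Equiv.coe_refl] at this
      rw [show (R : Matrix _ _ ℂ) = ((u : Matrix (Fin n) (Fin n) ℂ) * Q).submatrix fc.symm id from rfl]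
      rw [show (Rinv : Matrix _ _ ℂ) =
        (Q' * (↑u⁻¹ : Matrix (Fin n) (Fin n) ℂ)).submatrix id fc.symm from rfl]
      rw [this]
      have : (u : Matrix (Fin n) (Fin n) ℂ) * Q * (Q' * (↑u⁻¹ : Matrix (Fin n) (Fin n) ℂ)) =
          1 := by
        rw [show (u : Matrix (Fin n) (Fin n) ℂ) * Q * (Q' * (↑u⁻¹ : Matrix (Fin n) (Fin n) ℂ))
          = (u : Matrix (Fin n) (Fin n) ℂ) * (Q * Q' * (↑u⁻¹ : Matrix (Fin n) (Fin n) ℂ)) by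
            simp only [Matrix.mul_assoc], hQQ', one_mul]
        exact u.mul_inv
      rw [this, Matrix.submatrix_one_equiv fc.symm]
    exact ⟨⟨R, Rinv, h1, mul_eq_one_comm.mp h1⟩, rfl⟩
  exact ⟨mu, R, hRunit, hmu, rfl⟩

end Bundle
section Perturb

lemma exists_typeIIa_near (μ : ℂ) (h : TypeIIaParam μ) (G : Set ℂ) (hG : G.Finite)
    {ε : ℝ} (hε : 0 < ε) : ∃ ν, TypeIIaParam ν ∧ ν ∉ G ∧ dist ν μ < ε := by
  rcases h with habs | ⟨θ, hθ0, hθπ, rfl⟩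
  · have hμpos : 0 < ‖μ‖ := lt_trans one_pos habs
    have hμ0 : μ ≠ 0 := by
      intro h0; rw [h0, norm_zero] at habs; exact absurd habs (by norm_num)
    set δ := ε / ‖μ‖ with hδdef
    have hδ : 0 < δ := div_pos hε hμpos
    have hinj : Set.InjOn (fun t : ℝ => μ * (1 + (t : ℂ))) (Set.Ioo 0 δ) := by
      intro a _ b _ hab
      simp only at hab
      have h1 := mul_left_cancel₀ hμ0 hab
      have h2 : (a : ℂ) = (b : ℂ) := by linear_combination h1
      exact_mod_cast h2
    have hinf : ((fun t : ℝ => μ * (1 + (t : ℂ))) '' Set.Ioo 0 δ).Infinite :=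
      (Set.Ioo_infinite hδ).image hinj
    obtain ⟨ν, ⟨⟨t, ht, rfl⟩, hνG⟩⟩ := (hinf.diff hG).nonempty
    refine ⟨_, Or.inl ?_, hνG, ?_⟩
    · have h1 : ‖μ * (1 + (t : ℂ))‖ = ‖μ‖ * (1 + t) := by
        rw [norm_mul]
        congr 1
        rw [show (1 + (t : ℂ)) = ((1 + t : ℝ) : ℂ) by push_cast; ring, Complex.norm_real, Real.norm_eq_abs,
          abs_of_pos (by linarith [ht.1])]
      rw [h1]
      nlinarith [ht.1, habs]
    · have h2 : dist (μ * (1 + (t : ℂ))) μ = ‖μ‖ * t := by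
        rw [Complex.dist_eq, show μ * (1 + (t : ℂ)) - μ = μ * (t : ℂ) by ring,
          norm_mul, Complex.norm_real, Real.norm_eq_abs, abs_of_pos ht.1]
      rw [h2]
      calc ‖μ‖ * t < ‖μ‖ * δ := mul_lt_mul_of_pos_left ht.2 hμpos
        _ = ε := by rw [hδdef]; field_simp
  · set c : ℝ → ℂ := fun x => Complex.exp ((x : ℂ) * Complex.I) with hc
    have hccont : Continuous c :=
      Complex.continuous_exp.comp (Complex.continuous_ofReal.mul continuous_const)
    have hU : IsOpen {x : ℝ | dist (c x) (c θ) < ε} :=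
      IsOpen.preimage (hccont.dist continuous_const) isOpen_Iio
    obtain ⟨δ, hδ0, hball⟩ := Metric.isOpen_iff.mp hU θ (by simp [hε])
    set δ' := min δ (min θ (Real.pi - θ)) with hδ'def
    have hδ'0 : 0 < δ' := lt_min hδ0 (lt_min hθ0 (by linarith))
    have hd1 : δ' ≤ δ := min_le_left _ _
    have hd2 : δ' ≤ θ := le_trans (min_le_right _ _) (min_le_left _ _)
    have hd3 : δ' ≤ Real.pi - θ := le_trans (min_le_right _ _) (min_le_right _ _)
    have hmem : ∀ x ∈ Set.Ioo (θ - δ') (θ + δ'),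
        x ∈ Set.Ioo (0 : ℝ) Real.pi ∧ dist (c x) (c θ) < ε := by
      intro x hx
      obtain ⟨hx1, hx2⟩ := hx
      refine ⟨⟨by linarith, by linarith⟩, ?_⟩
      refine hball ?_
      rw [Metric.mem_ball, Real.dist_eq, abs_lt]
      constructor <;> linarith
    have hπ : 0 < Real.pi := Real.pi_pos
    have hinj : Set.InjOn c (Set.Ioo (θ - δ') (θ + δ')) := by
      intro a ha b hb hab
      have hab2 : Complex.exp ((a : ℂ) * Complex.I) = Complex.exp ((b : ℂ) * Complex.I) := hab
      rw [Complex.exp_eq_exp_iff_exists_int] at hab2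
      obtain ⟨n, hn⟩ := hab2
      have hn' : (a : ℂ) = (b : ℂ) + n * (2 * Real.pi) := by
        have hfac : ((a : ℂ) - (b : ℂ) - n * (2 * Real.pi)) * Complex.I = 0 := by
          push_cast at hn ⊢
          linear_combination hn
        rcases mul_eq_zero.mp hfac with h | h
        · linear_combination h
        · exact absurd h Complex.I_ne_zero
      have hreal : a = b + n * (2 * Real.pi) := by exact_mod_cast hn'
      have hab' : |a - b| < 2 * Real.pi := by
        obtain ⟨ha1, ha2⟩ := ha; obtain ⟨hb1, hb2⟩ := hb
        rw [abs_lt]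
        constructor <;> nlinarith
      have habs2 : |(n : ℝ)| * (2 * Real.pi) < 2 * Real.pi := by
        have e1 : |(n : ℝ)| * (2 * Real.pi) = |(n : ℝ) * (2 * Real.pi)| := by
          rw [abs_mul, abs_of_pos (by positivity : (0 : ℝ) < 2 * Real.pi)]
        have e2 : (n : ℝ) * (2 * Real.pi) = a - b := by rw [hreal]; ring
        rw [e1, e2]
        exact hab'
      have hn0 : n = 0 := by
        have h1 : |(n : ℝ)| < 1 := by
          by_contra hcon
          push_neg at hcon
          nlinarith
        rw [abs_lt] at h1
        have h2a : (-1 : ℝ) < (n : ℝ) := h1.1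
        have h2b : ((n : ℝ)) < 1 := h1.2
        have h3a : (-1 : ℤ) < n := by exact_mod_cast h2a
        have h3b : n < (1 : ℤ) := by exact_mod_cast h2b
        omega
      rw [hreal, hn0]
      push_cast
      ring
    have hinf : (c '' Set.Ioo (θ - δ') (θ + δ')).Infinite :=
      (Set.Ioo_infinite (by linarith)).image hinj
    obtain ⟨ν, ⟨⟨x, hx, rfl⟩, hνG⟩⟩ := (hinf.diff hG).nonempty
    obtain ⟨⟨hx0, hxπ⟩, hxd⟩ := hmem x hx
    exact ⟨c x, Or.inr ⟨x, hx0, hxπ, rfl⟩, hνG, hxd⟩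

lemma exists_perturb_fun (V G : Finset ℂ) (hV : ∀ v ∈ V, TypeIIaParam v) {ε : ℝ} (hε : 0 < ε) :
    ∃ f : ℂ → ℂ, (∀ v ∈ V, TypeIIaParam (f v) ∧ f v ∉ G ∧ dist (f v) v < ε) ∧
      Set.InjOn f (V : Set ℂ) := by
  classical
  induction V using Finset.induction with
  | empty => exact ⟨id, by simp, by simp⟩
  | @insert a V ha ih =>
    obtain ⟨f, hf, hfinj⟩ := ih (fun v hv => hV v (Finset.mem_insert_of_mem hv))
    obtain ⟨b, hb1, hb2, hb3⟩ := exists_typeIIa_near a (hV a (Finset.mem_insert_self a V))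
      ((G : Set ℂ) ∪ f '' V) (Set.Finite.union G.finite_toSet
        ((V.finite_toSet).image _)) hε
    refine ⟨Function.update f a b, ?_, ?_⟩
    · intro v hv
      rcases Finset.mem_insert.mp hv with rfl | hv2
      · rw [Function.update_self]
        exact ⟨hb1, fun hbG => hb2 (Or.inl hbG), hb3⟩
      · rw [Function.update_of_ne (by rintro rfl; exact ha hv2)]
        exact hf v hv2
    · intro x hx y hy hxy
      simp only [Finset.coe_insert, Set.mem_insert_iff] at hx hy
      rcases hx with rfl | hx <;> rcases hy with rfl | hy
      · rfl
      · rw [Function.update_self, Function.update_of_ne (by rintro rfl; exact ha hy)] at hxy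
        exact absurd hxy.symm (fun h => hb2 (Or.inr ⟨y, hy, h⟩))
      · rw [Function.update_self, Function.update_of_ne (by rintro rfl; exact ha hx)] at hxy
        exact absurd hxy (fun h => hb2 (Or.inr ⟨x, hx, h⟩))
      · rw [Function.update_of_ne (by rintro rfl; exact ha hx),
          Function.update_of_ne (by rintro rfl; exact ha hy)] at hxy
        exact hfinj hx hy hxy

lemma vec_mem_closure {N : ℕ} (w : Fin N → ℂ) (hw : ∀ i, TypeIIaParam (w i)) (G : Finset ℂ) :
    w ∈ closure {ν : Fin N → ℂ | (∀ i, TypeIIaParam (ν i)) ∧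
      (∀ i j, ν i = ν j ↔ w i = w j) ∧ ∀ i, ν i ∉ G} := by
  classical
  rw [Metric.mem_closure_iff]
  intro ε hε
  obtain ⟨f, hf, hfinj⟩ := exists_perturb_fun (Finset.image w Finset.univ) G
    (by intro v hv; obtain ⟨i, _, rfl⟩ := Finset.mem_image.mp hv; exact hw i) hε
  have hmemV : ∀ i, w i ∈ Finset.image w Finset.univ := fun i =>
    Finset.mem_image_of_mem w (Finset.mem_univ i)
  refine ⟨fun i => f (w i), ⟨fun i => (hf _ (hmemV i)).1, fun i j => ?_,
    fun i => (hf _ (hmemV i)).2.1⟩, ?_⟩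
  · constructor
    · intro hfij
      exact hfinj (Finset.mem_coe.mpr (hmemV i)) (Finset.mem_coe.mpr (hmemV j)) hfij
    · intro hwij
      show f (w i) = f (w j)
      rw [hwij]
  · rw [dist_pi_lt_iff hε]
    intro i
    rw [dist_comm]
    exact (hf _ (hmemV i)).2.2

end Perturb
section Cont

variable {X : Type*} [TopologicalSpace X]

lemma continuous_fromBlocks {m n m' n' : ℕ}
    {A : X → Matrix (Fin m) (Fin m') ℂ} {B : X → Matrix (Fin m) (Fin n') ℂ}
    {C : X → Matrix (Fin n) (Fin m') ℂ} {D : X → Matrix (Fin n) (Fin n') ℂ}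
    (hA : Continuous A) (hB : Continuous B) (hC : Continuous C) (hD : Continuous D) :
    Continuous fun x => Matrix.fromBlocks (A x) (B x) (C x) (D x) := by
  apply continuous_matrix
  rintro (i | i) (j | j)
  · exact hA.matrix_elem i j
  · exact hB.matrix_elem i j
  · exact hC.matrix_elem i j
  · exact hD.matrix_elem i j

lemma continuous_dsum {m n : ℕ} {A : X → Matrix (Fin m) (Fin m) ℂ}
    {B : X → Matrix (Fin n) (Fin n) ℂ} (hA : Continuous A) (hB : Continuous B) :
    Continuous fun x => dsum (A x) (B x) :=
  (continuous_fromBlocks hA continuous_const continuous_const hB).matrix_reindex _ _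

lemma continuous_finDsum : ∀ {q : ℕ} (p : Fin q → ℕ)
    (M : X → (i : Fin q) → Matrix (Fin (p i)) (Fin (p i)) ℂ),
    (∀ i, Continuous fun x => M x i) → Continuous fun x => finDsum p (M x)
  | 0, _, _, _ => continuous_const
  | q + 1, p, M, hM =>
    continuous_dsum (hM 0)
      (continuous_finDsum (fun i => p i.succ) (fun x i => M x i.succ) fun i => hM i.succ)

lemma continuous_Jblock (k : ℕ) : Continuous fun μ : ℂ => Jblock k μ := by
  apply continuous_matrix
  intro i j
  simp only [Jblock, Matrix.of_apply]
  by_cases h1 : (j : ℕ) = (i : ℕ)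
  · simp only [h1, if_true]
    exact continuous_id
  · simp only [h1, if_false]
    exact continuous_const

lemma continuous_Hblock (k : ℕ) : Continuous fun μ : ℂ => Hblock k μ :=
  (continuous_fromBlocks continuous_const continuous_const (continuous_Jblock k)
    continuous_const).matrix_reindex _ _

lemma continuous_matWith (d : CongData) : Continuous fun mu : Fin d.n3 → ℂ => d.matWith mu := by
  unfold CongData.matWith
  refine continuous_dsum continuous_const (continuous_dsum continuous_const
    (continuous_dsum ?_ continuous_const))
  refine continuous_finDsum _ _ fun i => ?_
  exact (continuous_Hblock (d.m i)).comp (continuous_apply i)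

end Cont
section TwoSum

lemma dsum_mul {m n : ℕ} (A A' : Matrix (Fin m) (Fin m) ℂ) (B B' : Matrix (Fin n) (Fin n) ℂ) :
    dsum A B * dsum A' B' = dsum (A * A') (B * B') := by
  unfold dsum
  simp only [Matrix.reindex_apply]
  rw [Matrix.submatrix_mul_equiv _ _ _ finSumFinEquiv.symm _]
  simp [Matrix.fromBlocks_multiply]

lemma dsum_transpose {m n : ℕ} (A : Matrix (Fin m) (Fin m) ℂ) (B : Matrix (Fin n) (Fin n) ℂ) :
    (dsum A B)ᵀ = dsum Aᵀ Bᵀ := by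
  ext i j
  rw [Matrix.transpose_apply]
  refine Fin.addCases (fun i => ?_) (fun i => ?_) i <;>
    refine Fin.addCases (fun j => ?_) (fun j => ?_) j <;> simp

lemma dsum_one {m n : ℕ} :
    dsum (1 : Matrix (Fin m) (Fin m) ℂ) (1 : Matrix (Fin n) (Fin n) ℂ) = 1 := by
  unfold dsum
  rw [Matrix.fromBlocks_one]
  simp only [Matrix.reindex_apply]
  exact Matrix.submatrix_one_equiv finSumFinEquiv.symm

lemma isUnit_dsum {m n : ℕ} {P : Matrix (Fin m) (Fin m) ℂ} {Q : Matrix (Fin n) (Fin n) ℂ}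
    (hP : IsUnit P) (hQ : IsUnit Q) : IsUnit (dsum P Q) := by
  obtain ⟨u, rfl⟩ := hP
  obtain ⟨v, rfl⟩ := hQ
  have h1 : dsum (u : Matrix (Fin m) (Fin m) ℂ) (v : Matrix (Fin n) (Fin n) ℂ) *
      dsum (↑u⁻¹ : Matrix (Fin m) (Fin m) ℂ) (↑v⁻¹ : Matrix (Fin n) (Fin n) ℂ) = 1 := by
    rw [dsum_mul, Units.mul_inv, Units.mul_inv, dsum_one]
  exact ⟨⟨_, _, h1, mul_eq_one_comm.mp h1⟩, rfl⟩

lemma stepA (d e : CongData) (hdisj : d.SH ∩ e.SH = ∅)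
    {A : Matrix (Fin d.size) (Fin d.size) ℂ} {B : Matrix (Fin e.size) (Fin e.size) ℂ}
    (hA : A ∈ congBundle d) (hB : B ∈ congBundle e)
    (h : d.size + e.size = (d.append e).size) :
    Matrix.reindex (finCongr h) (finCongr h) (dsum A B) ∈ closure (congBundle (d.append e)) := by
  classical
  obtain ⟨m1, P, hP, hm1, rfl⟩ := hA
  obtain ⟨m2, Q, hQ, hm2, rfl⟩ := hB
  set g : (Fin e.n3 → ℂ) → Matrix (Fin (d.append e).size) (Fin (d.append e).size) ℂ :=
    fun ν => Matrix.reindex (finCongr h) (finCongr h)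
      (dsum (P * d.matWith m1 * Pᵀ) (Q * e.matWith ν * Qᵀ)) with hg
  have hgcont : Continuous g := by
    apply Continuous.matrix_reindex
    exact continuous_dsum continuous_const
      ((continuous_const.matrix_mul (continuous_matWith e)).matrix_mul continuous_const)
  set S : Set (Fin e.n3 → ℂ) := {ν | (∀ i, TypeIIaParam (ν i)) ∧
    (∀ i j, ν i = ν j ↔ m2 i = m2 j) ∧ ∀ i, ν i ∉ Finset.image m1 Finset.univ} with hS
  have hm2S : m2 ∈ closure S := vec_mem_closure m2 hm2.1 _
  have himg : ∀ ν ∈ S, g ν ∈ congBundle (d.append e) := by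
    intro ν hν
    obtain ⟨hν1, hν2, hν3⟩ := hν
    have hparams : (d.append e).ParamsOK (Fin.append m1 ν) := by
      constructor
      · intro i
        refine Fin.addCases (fun i => ?_) (fun i => ?_) i
        · rw [show (Fin.append m1 ν) (Fin.castAdd _ i) = m1 i from Fin.append_left _ _ _]
          exact hm1.1 i
        · rw [show (Fin.append m1 ν) (Fin.natAdd _ i) = ν i from Fin.append_right _ _ _]
          exact hν1 i
      · intro i j
        have hcross1 : ∀ (a : Fin d.n3) (b : Fin e.n3), m1 a ≠ ν b := by
          intro a b hcon
          exact hν3 b (hcon ▸ Finset.mem_image_of_mem m1 (Finset.mem_univ a))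
        have hcross2 : ∀ (a : Fin d.n3) (b : Fin e.n3), d.mu a ≠ e.mu b := by
          intro a b hcon
          have : d.mu a ∈ d.SH ∩ e.SH := ⟨⟨a, rfl⟩, ⟨b, hcon.symm⟩⟩
          rw [hdisj] at this
          exact this
        refine Fin.addCases (fun i' => ?_) (fun i' => ?_) i <;>
          refine Fin.addCases (fun j' => ?_) (fun j' => ?_) j
        · rw [show (Fin.append m1 ν) (Fin.castAdd _ i') = m1 i' from Fin.append_left _ _ _,
            show (Fin.append m1 ν) (Fin.castAdd _ j') = m1 j' from Fin.append_left _ _ _,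
            show (d.append e).mu (Fin.castAdd _ i') = d.mu i' from Fin.append_left _ _ _,
            show (d.append e).mu (Fin.castAdd _ j') = d.mu j' from Fin.append_left _ _ _]
          exact hm1.2 i' j'
        · rw [show (Fin.append m1 ν) (Fin.castAdd _ i') = m1 i' from Fin.append_left _ _ _,
            show (Fin.append m1 ν) (Fin.natAdd _ j') = ν j' from Fin.append_right _ _ _,
            show (d.append e).mu (Fin.castAdd _ i') = d.mu i' from Fin.append_left _ _ _,
            show (d.append e).mu (Fin.natAdd _ j') = e.mu j' from Fin.append_right _ _ _]
          exact iff_of_true (hcross1 i' j') (hcross2 i' j')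
        · rw [show (Fin.append m1 ν) (Fin.natAdd _ i') = ν i' from Fin.append_right _ _ _,
            show (Fin.append m1 ν) (Fin.castAdd _ j') = m1 j' from Fin.append_left _ _ _,
            show (d.append e).mu (Fin.natAdd _ i') = e.mu i' from Fin.append_right _ _ _,
            show (d.append e).mu (Fin.castAdd _ j') = d.mu j' from Fin.append_left _ _ _]
          exact iff_of_true (fun hcon => hcross1 j' i' hcon.symm)
            (fun hcon => hcross2 j' i' hcon.symm)
        · rw [show (Fin.append m1 ν) (Fin.natAdd _ i') = ν i' from Fin.append_right _ _ _,
            show (Fin.append m1 ν) (Fin.natAdd _ j') = ν j' from Fin.append_right _ _ _,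
            show (d.append e).mu (Fin.natAdd _ i') = e.mu i' from Fin.append_right _ _ _,
            show (d.append e).mu (Fin.natAdd _ j') = e.mu j' from Fin.append_right _ _ _]
          exact (not_iff_not.mpr (hν2 i' j')).trans (hm2.2 i' j')
    have hMM : dsum (P * d.matWith m1 * Pᵀ) (Q * e.matWith ν * Qᵀ) =
        dsum P Q * dsum (d.matWith m1) (e.matWith ν) * (dsum P Q)ᵀ := by
      rw [dsum_transpose, dsum_mul, dsum_mul]
    show Matrix.reindex (finCongr h) (finCongr h)
      (dsum (P * d.matWith m1 * Pᵀ) (Q * e.matWith ν * Qᵀ)) ∈ congBundle (d.append e)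
    rw [hMM]
    exact mem_congBundle_of_permCong hparams (permCong_matWith_append d e m1 ν)
      (isUnit_dsum hP hQ) h
  have h1 : g m2 ∈ closure (g '' S) :=
    image_closure_subset_closure_image hgcont ⟨m2, hm2S, rfl⟩
  have h2 : g '' S ⊆ congBundle (d.append e) := by
    rintro _ ⟨ν, hν, rfl⟩
    exact himg ν hν
  have h3 := (closure_mono h2) h1
  exact h3

theorem thm2 (d e : CongData) (hdisj : d.SH ∩ e.SH = ∅)
    {A : Matrix (Fin d.size) (Fin d.size) ℂ} {B : Matrix (Fin e.size) (Fin e.size) ℂ}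
    (hA : A ∈ closure (congBundle d)) (hB : B ∈ closure (congBundle e))
    (h : d.size + e.size = (d.append e).size) :
    Matrix.reindex (finCongr h) (finCongr h) (dsum A B) ∈ closure (congBundle (d.append e)) := by
  set φ : Matrix (Fin d.size) (Fin d.size) ℂ × Matrix (Fin e.size) (Fin e.size) ℂ →
      Matrix (Fin (d.append e).size) (Fin (d.append e).size) ℂ :=
    fun z => Matrix.reindex (finCongr h) (finCongr h) (dsum z.1 z.2) with hφdef
  have hφ : Continuous φ :=
    (continuous_dsum continuous_fst continuous_snd).matrix_reindex _ _
  have hAB : (A, B) ∈ closure (congBundle d ×ˢ congBundle e) := by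
    rw [closure_prod_eq]
    exact ⟨hA, hB⟩
  have h1 : φ (A, B) ∈ closure (φ '' (congBundle d ×ˢ congBundle e)) :=
    image_closure_subset_closure_image hφ ⟨(A, B), hAB, rfl⟩
  have h2 : φ '' (congBundle d ×ˢ congBundle e) ⊆ closure (congBundle (d.append e)) := by
    rintro _ ⟨⟨A', B'⟩, ⟨hA', hB'⟩, rfl⟩
    exact stepA d e hdisj hA' hB' h
  have h3 := (closure_mono h2) h1
  rwa [closure_closure] at h3

end TwoSum
section Main

lemma SH_append_subset (d e : CongData) : (d.append e).SH ⊆ d.SH ∪ e.SH := by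
  rintro x ⟨i, rfl⟩
  refine Fin.addCases (fun i' => ?_) (fun i' => ?_) i
  · exact Or.inl ⟨i', (Fin.append_left d.mu e.mu i').symm⟩
  · exact Or.inr ⟨i', (Fin.append_right d.mu e.mu i').symm⟩

lemma SH_appendAll_subset : ∀ {q : ℕ} (C : Fin q → CongData),
    (appendAll C).SH ⊆ ⋃ i, (C i).SH
  | 0, C => by rintro x ⟨i, rfl⟩; exact i.elim0
  | q + 1, C => by
    intro x hx
    rcases SH_append_subset (C 0) (appendAll fun i => C i.succ) hx with h | h
    · exact Set.mem_iUnion.mpr ⟨0, h⟩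
    · obtain ⟨i, hi⟩ := Set.mem_iUnion.mp (SH_appendAll_subset (fun i => C i.succ) h)
      exact Set.mem_iUnion.mpr ⟨i.succ, hi⟩

lemma reindex_dsum_reindex {m n n' N : ℕ} (h1 : n = n') (h2 : m + n' = N) (h3 : m + n = N)
    (A : Matrix (Fin m) (Fin m) ℂ) (B : Matrix (Fin n) (Fin n) ℂ) :
    Matrix.reindex (finCongr h2) (finCongr h2)
        (dsum A (Matrix.reindex (finCongr h1) (finCongr h1) B)) =
      Matrix.reindex (finCongr h3) (finCongr h3) (dsum A B) := by
  subst h1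
  subst h2
  rfl

end Main
/-- **Lemma 3.7.**  If `A_i` belongs to the closure of `ℬᶜ(C_i)` and the Type II-(a)
parameter sets of the `C_i` are pairwise disjoint, then `A_1 ⊕ ⋯ ⊕ A_q` belongs to the
closure of `ℬᶜ(C_1 ⊕ ⋯ ⊕ C_q)`. -/
theorem dsum_mem_closure_congBundle_of_mem_closure (q : ℕ) (C : Fin q → CongData)
    (hC : ∀ i, (C i).Valid)
    (A : (i : Fin q) → Matrix (Fin (C i).size) (Fin (C i).size) ℂ)
    (hA : ∀ i, A i ∈ closure (congBundle (C i)))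
    (hdisj : ∀ i j, i ≠ j → (C i).SH ∩ (C j).SH = ∅) :
    ∃ hsz : finSize (fun i => (C i).size) = (appendAll C).size,
      Matrix.reindex (finCongr hsz) (finCongr hsz) (finDsum (fun i => (C i).size) A) ∈
        closure (congBundle (appendAll C)) := by
  induction q with
  | zero =>
    refine ⟨rfl, ?_⟩
    apply subset_closure
    refine ⟨Fin.elim0, 1, isUnit_one, ⟨fun i => i.elim0, fun i => i.elim0⟩, ?_⟩
    ext i j
    exact i.elim0
  | succ q ih =>
    obtain ⟨h1, hmem⟩ := ih (fun i => C i.succ) (fun i => hC i.succ) (fun i => A i.succ)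
      (fun i => hA i.succ)
      (fun i j hij => hdisj i.succ j.succ fun h => hij (Fin.succ_injective _ h))
    have hdisj0 : (C 0).SH ∩ (appendAll fun i => C i.succ).SH = ∅ := by
      apply Set.eq_empty_iff_forall_notMem.mpr
      rintro x ⟨hx0, hxT⟩
      obtain ⟨i, hxi⟩ := Set.mem_iUnion.mp (SH_appendAll_subset (fun i => C i.succ) hxT)
      have hne : (0 : Fin (q + 1)) ≠ i.succ := (Fin.succ_ne_zero i).symm
      exact Set.eq_empty_iff_forall_notMem.mp (hdisj 0 i.succ hne) x ⟨hx0, hxi⟩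
    have h2 : ((C 0).append (appendAll fun i => C i.succ)).size =
        (C 0).size + (appendAll fun i => C i.succ).size :=
      (C 0).size_append (appendAll fun i => C i.succ)
    have hsz : finSize (fun i : Fin (q + 1) => (C i).size) = (appendAll C).size := by
      show (C 0).size + finSize (fun i : Fin q => (C i.succ).size) = _
      rw [h1]
      exact h2.symm
    refine ⟨hsz, ?_⟩
    have hthm := thm2 (C 0) (appendAll fun i => C i.succ) hdisj0 (hA 0) hmem h2.symm
    rw [reindex_dsum_reindex h1 h2.symm hsz] at hthm
    exact hthm
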